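/- E_{(ω₁,ω₂)} ‖ (I − αH(ω₁)) q( w − α g(ω₁), ω₂) − (I − α∇²J(w)) ∇J( w − α∇J(w) ) ‖² ≤ 6(1+αL)²σ_G²(1/N_o + L²α²/N_in) + (6α²σ_H²/N_in)(B² + σ_G²/N_o) + (9α⁴/N_in²)(σ_H⁴ + L⁴σ_G⁴). (This is the paper's Lemma 7 / Appendix Lemma C.1: the per-task disagreement between the stochastic task meta-gradient and the exact task meta-gradient is bounded in mean square.) -/

import Mathlib

open MeasureTheory ProbabilityTheory
open ENNReal

/-- arithmetic core: squaring the triangle-inequality bound -/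
lemma sq_bound_aux (a b h α L B c s : ℝ) (ha : 0 ≤ a) (hb : 0 ≤ b) (hh : 0 ≤ h)
    (hα : 0 ≤ α) (hL : 0 ≤ L) (hB : 0 ≤ B) (hc : c = 1 + α * L) (hs : 0 ≤ s)
    (hX : s ≤ c * (a + L * α * b) + α * B * h + α * h * (a + L * α * b)) :
    s ^ 2 ≤ 6 * c ^ 2 * a ^ 2 + 6 * c ^ 2 * L ^ 2 * α ^ 2 * b ^ 2
      + 3 * α ^ 2 * B ^ 2 * h ^ 2 + 6 * α ^ 2 * (h ^ 2 * a ^ 2)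
      + 3 * α ^ 4 * h ^ 4 + 3 * α ^ 4 * L ^ 4 * b ^ 4 := by
  have hcpos : 0 ≤ c := by rw [hc]; positivity
  set d := a + L * α * b with hd
  have hdpos : 0 ≤ d := by positivity
  have h1 : s ^ 2 ≤ (c * d + α * B * h + α * h * d) ^ 2 := by
    have hx : 0 ≤ c * d + α * B * h + α * h * d := by positivity
    nlinarith [hX, hs]
  have h2 : (c * d + α * B * h + α * h * d) ^ 2
      ≤ 3 * (c * d) ^ 2 + 3 * (α * B * h) ^ 2 + 3 * (α * h * d) ^ 2 := by
    nlinarith [sq_nonneg (c * d - α * B * h), sq_nonneg (c * d - α * h * d),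
      sq_nonneg (α * B * h - α * h * d)]
  have hdsq : d ^ 2 ≤ 2 * a ^ 2 + 2 * (L * α * b) ^ 2 := by
    nlinarith [sq_nonneg (a - L * α * b)]
  have h3 : 3 * (c * d) ^ 2 ≤ 6 * c ^ 2 * a ^ 2 + 6 * c ^ 2 * L ^ 2 * α ^ 2 * b ^ 2 := by
    have := mul_le_mul_of_nonneg_left hdsq (show (0:ℝ) ≤ 3 * c ^ 2 by positivity)
    calc 3 * (c * d) ^ 2 = 3 * c ^ 2 * d ^ 2 := by ring
      _ ≤ 3 * c ^ 2 * (2 * a ^ 2 + 2 * (L * α * b) ^ 2) := this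
      _ = 6 * c ^ 2 * a ^ 2 + 6 * c ^ 2 * L ^ 2 * α ^ 2 * b ^ 2 := by ring
  have h4 : 3 * (α * h * d) ^ 2 ≤ 6 * α ^ 2 * (h ^ 2 * a ^ 2)
      + 6 * α ^ 2 * h ^ 2 * (L * α * b) ^ 2 := by
    have := mul_le_mul_of_nonneg_left hdsq (show (0:ℝ) ≤ 3 * α ^ 2 * h ^ 2 by positivity)
    calc 3 * (α * h * d) ^ 2 = 3 * α ^ 2 * h ^ 2 * d ^ 2 := by ring
      _ ≤ 3 * α ^ 2 * h ^ 2 * (2 * a ^ 2 + 2 * (L * α * b) ^ 2) := this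
      _ = 6 * α ^ 2 * (h ^ 2 * a ^ 2) + 6 * α ^ 2 * h ^ 2 * (L * α * b) ^ 2 := by ring
  have h5 : 6 * α ^ 2 * h ^ 2 * (L * α * b) ^ 2
      ≤ 3 * α ^ 4 * h ^ 4 + 3 * α ^ 4 * L ^ 4 * b ^ 4 := by
    have hsq : 0 ≤ (h ^ 2 - L ^ 2 * b ^ 2) ^ 2 := sq_nonneg _
    have := mul_le_mul_of_nonneg_left (le_of_sub_nonneg (by nlinarith [hsq] :
      (0:ℝ) ≤ (h ^ 4 + L ^ 4 * b ^ 4) - 2 * h ^ 2 * (L ^ 2 * b ^ 2)))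
      (show (0:ℝ) ≤ 3 * α ^ 4 by positivity)
    calc 6 * α ^ 2 * h ^ 2 * (L * α * b) ^ 2
        = 3 * α ^ 4 * (2 * h ^ 2 * (L ^ 2 * b ^ 2)) := by ring
      _ ≤ 3 * α ^ 4 * (h ^ 4 + L ^ 4 * b ^ 4) := this
      _ = 3 * α ^ 4 * h ^ 4 + 3 * α ^ 4 * L ^ 4 * b ^ 4 := by ring
  have h6 : 3 * (α * B * h) ^ 2 = 3 * α ^ 2 * B ^ 2 * h ^ 2 := by ring
  linarith

/-- lintegral over a product of a function of the first coordinate -/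
lemma lintegral_fst_prod' {Ω₁ Ω₂ : Type*} [MeasurableSpace Ω₁] [MeasurableSpace Ω₂]
    (P₁ : Measure Ω₁) (P₂ : Measure Ω₂) [SFinite P₂] [IsProbabilityMeasure P₂]
    (f : Ω₁ → ℝ≥0∞) (hf : Measurable f) :
    ∫⁻ p : Ω₁ × Ω₂, f p.1 ∂(P₁.prod P₂) = ∫⁻ ω₁, f ω₁ ∂P₁ := by
  rw [lintegral_prod (fun p : Ω₁ × Ω₂ => f p.1) (hf.comp measurable_fst).aemeasurable]
  simp [lintegral_const]

/-- pointwise bound on the meta-gradient disagreement -/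
lemma meta_pointwise {E : Type*} [NormedAddCommGroup E] [NormedSpace ℝ E]
    (α L B : ℝ) (hα : 0 ≤ α) (hL : 0 ≤ L) (hB : 0 ≤ B)
    (T Hm : E →L[ℝ] E) (Q Gs Ju : E) (b : ℝ) (hb : 0 ≤ b)
    (hT : ‖T‖ ≤ L) (hGs : ‖Gs‖ ≤ B)
    (hJu : ‖Ju - Gs‖ ≤ L * (α * b)) :
    ‖(ContinuousLinearMap.id ℝ E - α • Hm) Q - (ContinuousLinearMap.id ℝ E - α • T) Gs‖ ^ 2
      ≤ 6 * (1 + α * L) ^ 2 * ‖Q - Ju‖ ^ 2 + 6 * (1 + α * L) ^ 2 * L ^ 2 * α ^ 2 * b ^ 2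
        + 3 * α ^ 2 * B ^ 2 * ‖Hm - T‖ ^ 2 + 6 * α ^ 2 * (‖Hm - T‖ ^ 2 * ‖Q - Ju‖ ^ 2)
        + 3 * α ^ 4 * ‖Hm - T‖ ^ 4 + 3 * α ^ 4 * L ^ 4 * b ^ 4 := by
  have hid : (ContinuousLinearMap.id ℝ E - α • Hm) Q - (ContinuousLinearMap.id ℝ E - α • T) Gs
      = (ContinuousLinearMap.id ℝ E - α • T) (Q - Gs) - α • ((Hm - T) Gs)
        - α • ((Hm - T) (Q - Gs)) := by
    simp only [ContinuousLinearMap.sub_apply, ContinuousLinearMap.smul_apply,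
      ContinuousLinearMap.id_apply, map_sub]
    module
  have hAop : ‖ContinuousLinearMap.id ℝ E - α • T‖ ≤ 1 + α * L := by
    refine (norm_sub_le _ _).trans ?_
    have h1 : ‖ContinuousLinearMap.id ℝ E‖ ≤ 1 := ContinuousLinearMap.norm_id_le
    have h2 : ‖α • T‖ ≤ α * L := by
      rw [norm_smul α T, Real.norm_of_nonneg hα]
      exact mul_le_mul_of_nonneg_left hT hα
    linarith
  have hQGs : ‖Q - Gs‖ ≤ ‖Q - Ju‖ + L * α * b := by
    calc ‖Q - Gs‖ = dist Q Gs := (dist_eq_norm _ _).symm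
      _ ≤ dist Q Ju + dist Ju Gs := dist_triangle _ _ _
      _ = ‖Q - Ju‖ + ‖Ju - Gs‖ := by rw [dist_eq_norm, dist_eq_norm]
      _ ≤ ‖Q - Ju‖ + L * α * b := by
          have h := hJu; nlinarith [hJu]
  have hd : 0 ≤ ‖Q - Ju‖ + L * α * b := by positivity
  have t1 : ‖(ContinuousLinearMap.id ℝ E - α • T) (Q - Gs)‖
      ≤ (1 + α * L) * (‖Q - Ju‖ + L * α * b) := by
    calc ‖(ContinuousLinearMap.id ℝ E - α • T) (Q - Gs)‖
        ≤ ‖ContinuousLinearMap.id ℝ E - α • T‖ * ‖Q - Gs‖ :=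
          ContinuousLinearMap.le_opNorm _ _
      _ ≤ (1 + α * L) * (‖Q - Ju‖ + L * α * b) :=
          mul_le_mul hAop hQGs (norm_nonneg _) (by positivity)
  have t2 : ‖α • ((Hm - T) Gs)‖ ≤ α * B * ‖Hm - T‖ := by
    rw [norm_smul α ((Hm - T) Gs), Real.norm_of_nonneg hα]
    have : ‖(Hm - T) Gs‖ ≤ ‖Hm - T‖ * B :=
      (ContinuousLinearMap.le_opNorm _ _).trans
        (mul_le_mul_of_nonneg_left hGs (norm_nonneg _))
    calc α * ‖(Hm - T) Gs‖ ≤ α * (‖Hm - T‖ * B) :=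
          mul_le_mul_of_nonneg_left this hα
      _ = α * B * ‖Hm - T‖ := by ring
  have t3 : ‖α • ((Hm - T) (Q - Gs))‖ ≤ α * ‖Hm - T‖ * (‖Q - Ju‖ + L * α * b) := by
    rw [norm_smul α ((Hm - T) (Q - Gs)), Real.norm_of_nonneg hα]
    have : ‖(Hm - T) (Q - Gs)‖ ≤ ‖Hm - T‖ * (‖Q - Ju‖ + L * α * b) :=
      (ContinuousLinearMap.le_opNorm _ _).trans
        (mul_le_mul_of_nonneg_left hQGs (norm_nonneg _))
    calc α * ‖(Hm - T) (Q - Gs)‖ ≤ α * (‖Hm - T‖ * (‖Q - Ju‖ + L * α * b)) :=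
          mul_le_mul_of_nonneg_left this hα
      _ = α * ‖Hm - T‖ * (‖Q - Ju‖ + L * α * b) := by ring
  have hX : ‖(ContinuousLinearMap.id ℝ E - α • Hm) Q - (ContinuousLinearMap.id ℝ E - α • T) Gs‖
      ≤ (1 + α * L) * (‖Q - Ju‖ + L * α * b) + α * B * ‖Hm - T‖
        + α * ‖Hm - T‖ * (‖Q - Ju‖ + L * α * b) := by
    rw [hid]
    calc ‖(ContinuousLinearMap.id ℝ E - α • T) (Q - Gs) - α • ((Hm - T) Gs)
          - α • ((Hm - T) (Q - Gs))‖
        ≤ ‖(ContinuousLinearMap.id ℝ E - α • T) (Q - Gs) - α • ((Hm - T) Gs)‖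
          + ‖α • ((Hm - T) (Q - Gs))‖ := norm_sub_le _ _
      _ ≤ ‖(ContinuousLinearMap.id ℝ E - α • T) (Q - Gs)‖ + ‖α • ((Hm - T) Gs)‖
          + ‖α • ((Hm - T) (Q - Gs))‖ := by
            linarith [norm_sub_le ((ContinuousLinearMap.id ℝ E - α • T) (Q - Gs))
              (α • ((Hm - T) Gs))]
      _ ≤ _ := by linarith
  exact sq_bound_aux ‖Q - Ju‖ b ‖Hm - T‖ α L B (1 + α * L) _
    (norm_nonneg _) hb (norm_nonneg _) hα hL hB rfl (norm_nonneg _) hX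

set_option maxHeartbeats 2000000 in
/-- **Per-task meta-gradient noise bound (Lemma 7 / Appendix Lemma C.1 of Dif-MAML).**
The mean-square disagreement between the stochastic task meta-gradient and the exact task
meta-gradient is bounded. -/
theorem per_task_meta_gradient_noise_bound
    (M : ℕ) (α L B σG σH : ℝ) (Nin No : ℕ)
    (hα : 0 < α) (hL : 0 < L) (hB : 0 < B) (hσG : 0 < σG) (hσH : 0 < σH)
    (hNin : 1 ≤ Nin) (hNo : 1 ≤ No)
    (w : EuclideanSpace ℝ (Fin M))
    {Ω₁ Ω₂ : Type*} [MeasurableSpace Ω₁] [MeasurableSpace Ω₂]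
    (P₁ : Measure Ω₁) (P₂ : Measure Ω₂) [IsProbabilityMeasure P₁] [IsProbabilityMeasure P₂]
    (J : EuclideanSpace ℝ (Fin M) → ℝ)
    (hdiff : Differentiable ℝ J) (hdiff2 : Differentiable ℝ (gradient J))
    (hlip : ∀ u v, ‖gradient J u - gradient J v‖ ≤ L * ‖u - v‖)
    (hhess : ∀ u, ‖fderiv ℝ (gradient J) u‖ ≤ L)
    (hbound : ∀ u, ‖gradient J u‖ ≤ B)
    (g : Ω₁ → EuclideanSpace ℝ (Fin M))
    (H : Ω₁ → EuclideanSpace ℝ (Fin M) →L[ℝ] EuclideanSpace ℝ (Fin M))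
    (q : EuclideanSpace ℝ (Fin M) → Ω₂ → EuclideanSpace ℝ (Fin M))
    (hgmeas : Measurable g) (hHmeas : StronglyMeasurable H)
    (hqmeas : StronglyMeasurable (fun p : EuclideanSpace ℝ (Fin M) × Ω₂ => q p.1 p.2))
    (hg2 : ∫ ω₁, ‖g ω₁ - gradient J w‖ ^ 2 ∂P₁ ≤ σG ^ 2 / (Nin : ℝ))
    (hg4 : ∫ ω₁, ‖g ω₁ - gradient J w‖ ^ 4 ∂P₁ ≤ 3 * σG ^ 4 / (Nin : ℝ) ^ 2)
    (hH2 : ∫ ω₁, ‖H ω₁ - fderiv ℝ (gradient J) w‖ ^ 2 ∂P₁ ≤ σH ^ 2 / (Nin : ℝ))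
    (hH4 : ∫ ω₁, ‖H ω₁ - fderiv ℝ (gradient J) w‖ ^ 4 ∂P₁ ≤ 3 * σH ^ 4 / (Nin : ℝ) ^ 2)
    (hq2 : ∀ u, ∫ ω₂, ‖q u ω₂ - gradient J u‖ ^ 2 ∂P₂ ≤ σG ^ 2 / (No : ℝ))
    (hg2_int : Integrable (fun ω₁ => ‖g ω₁ - gradient J w‖ ^ 2) P₁)
    (hg4_int : Integrable (fun ω₁ => ‖g ω₁ - gradient J w‖ ^ 4) P₁)
    (hH2_int : Integrable (fun ω₁ => ‖H ω₁ - fderiv ℝ (gradient J) w‖ ^ 2) P₁)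
    (hH4_int : Integrable (fun ω₁ => ‖H ω₁ - fderiv ℝ (gradient J) w‖ ^ 4) P₁)
    (hq2_int : ∀ u, Integrable (fun ω₂ => ‖q u ω₂ - gradient J u‖ ^ 2) P₂)
    (hint : Integrable (fun p : Ω₁ × Ω₂ =>
      ‖(ContinuousLinearMap.id ℝ (EuclideanSpace ℝ (Fin M)) - α • H p.1)
          (q (w - α • g p.1) p.2)
        - (ContinuousLinearMap.id ℝ (EuclideanSpace ℝ (Fin M)) - α • fderiv ℝ (gradient J) w)
            (gradient J (w - α • gradient J w))‖ ^ 2) (P₁.prod P₂)) :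
    ∫ p : Ω₁ × Ω₂,
      ‖(ContinuousLinearMap.id ℝ (EuclideanSpace ℝ (Fin M)) - α • H p.1)
          (q (w - α • g p.1) p.2)
        - (ContinuousLinearMap.id ℝ (EuclideanSpace ℝ (Fin M)) - α • fderiv ℝ (gradient J) w)
            (gradient J (w - α • gradient J w))‖ ^ 2 ∂(P₁.prod P₂)
      ≤ 6 * (1 + α * L) ^ 2 * σG ^ 2 * (1 / (No : ℝ) + L ^ 2 * α ^ 2 / (Nin : ℝ))
        + (6 * α ^ 2 * σH ^ 2 / (Nin : ℝ)) * (B ^ 2 + σG ^ 2 / (No : ℝ))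
        + (9 * α ^ 4 / (Nin : ℝ) ^ 2) * (σH ^ 4 + L ^ 4 * σG ^ 4) := by
  have hNin1 : (1:ℝ) ≤ (Nin : ℝ) := by exact_mod_cast hNin
  have hNo1 : (1:ℝ) ≤ (No : ℝ) := by exact_mod_cast hNo
  have hNin0 : (0:ℝ) < (Nin : ℝ) := by linarith
  have hNo0 : (0:ℝ) < (No : ℝ) := by linarith
  set T := fderiv ℝ (gradient J) w with hTdef
  set Gs := gradient J (w - α • gradient J w) with hGsdef
  have hTle : ‖T‖ ≤ L := hhess w
  have hGsB : ‖Gs‖ ≤ B := hbound _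
  -- measurability
  have hgradcont : Continuous (gradient J) := hdiff2.continuous
  have hu_meas : Measurable fun ω₁ => w - α • g ω₁ :=
    measurable_const.sub (hgmeas.const_smul α)
  have hfb_meas : Measurable fun ω₁ => ‖g ω₁ - gradient J w‖ :=
    (hgmeas.sub measurable_const).norm
  have hfh_meas : Measurable fun ω₁ => ‖H ω₁ - T‖ :=
    (hHmeas.sub stronglyMeasurable_const).norm.measurable
  have hq_meas : Measurable fun p : Ω₁ × Ω₂ => q (w - α • g p.1) p.2 :=
    hqmeas.measurable.comp ((hu_meas.comp measurable_fst).prodMk measurable_snd)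
  have hfa_meas : Measurable
      fun p : Ω₁ × Ω₂ => ‖q (w - α • g p.1) p.2 - gradient J (w - α • g p.1)‖ :=
    (hq_meas.sub (hgradcont.measurable.comp (hu_meas.comp measurable_fst))).norm
  have ma2 : Measurable fun p : Ω₁ × Ω₂ =>
      ENNReal.ofReal (‖q (w - α • g p.1) p.2 - gradient J (w - α • g p.1)‖ ^ 2) :=
    ENNReal.measurable_ofReal.comp (hfa_meas.pow_const 2)
  have mb2 : Measurable fun ω₁ => ENNReal.ofReal (‖g ω₁ - gradient J w‖ ^ 2) :=
    ENNReal.measurable_ofReal.comp (hfb_meas.pow_const 2)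
  have mb4 : Measurable fun ω₁ => ENNReal.ofReal (‖g ω₁ - gradient J w‖ ^ 4) :=
    ENNReal.measurable_ofReal.comp (hfb_meas.pow_const 4)
  have mh2 : Measurable fun ω₁ => ENNReal.ofReal (‖H ω₁ - T‖ ^ 2) :=
    ENNReal.measurable_ofReal.comp (hfh_meas.pow_const 2)
  have mh4 : Measurable fun ω₁ => ENNReal.ofReal (‖H ω₁ - T‖ ^ 4) :=
    ENNReal.measurable_ofReal.comp (hfh_meas.pow_const 4)
  have mb2' : Measurable fun p : Ω₁ × Ω₂ => ENNReal.ofReal (‖g p.1 - gradient J w‖ ^ 2) :=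
    mb2.comp measurable_fst
  have mb4' : Measurable fun p : Ω₁ × Ω₂ => ENNReal.ofReal (‖g p.1 - gradient J w‖ ^ 4) :=
    mb4.comp measurable_fst
  have mh2' : Measurable fun p : Ω₁ × Ω₂ => ENNReal.ofReal (‖H p.1 - T‖ ^ 2) :=
    mh2.comp measurable_fst
  have mh4' : Measurable fun p : Ω₁ × Ω₂ => ENNReal.ofReal (‖H p.1 - T‖ ^ 4) :=
    mh4.comp measurable_fst
  have mcross : Measurable fun p : Ω₁ × Ω₂ =>
      ENNReal.ofReal (‖H p.1 - T‖ ^ 2)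
        * ENNReal.ofReal (‖q (w - α • g p.1) p.2 - gradient J (w - α • g p.1)‖ ^ 2) :=
    (mh2.comp measurable_fst).mul ma2
  -- base lintegral bounds over P₁
  have Jb2 : ∫⁻ ω₁, ENNReal.ofReal (‖g ω₁ - gradient J w‖ ^ 2) ∂P₁
      ≤ ENNReal.ofReal (σG ^ 2 / (Nin : ℝ)) := by
    rw [← ofReal_integral_eq_lintegral_ofReal hg2_int
      (Filter.Eventually.of_forall fun ω => by positivity)]
    exact ENNReal.ofReal_le_ofReal hg2
  have Jb4 : ∫⁻ ω₁, ENNReal.ofReal (‖g ω₁ - gradient J w‖ ^ 4) ∂P₁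
      ≤ ENNReal.ofReal (3 * σG ^ 4 / (Nin : ℝ) ^ 2) := by
    rw [← ofReal_integral_eq_lintegral_ofReal hg4_int
      (Filter.Eventually.of_forall fun ω => by positivity)]
    exact ENNReal.ofReal_le_ofReal hg4
  have Jh2 : ∫⁻ ω₁, ENNReal.ofReal (‖H ω₁ - T‖ ^ 2) ∂P₁
      ≤ ENNReal.ofReal (σH ^ 2 / (Nin : ℝ)) := by
    rw [← ofReal_integral_eq_lintegral_ofReal hH2_int
      (Filter.Eventually.of_forall fun ω => by positivity)]
    exact ENNReal.ofReal_le_ofReal hH2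
  have Jh4 : ∫⁻ ω₁, ENNReal.ofReal (‖H ω₁ - T‖ ^ 4) ∂P₁
      ≤ ENNReal.ofReal (3 * σH ^ 4 / (Nin : ℝ) ^ 2) := by
    rw [← ofReal_integral_eq_lintegral_ofReal hH4_int
      (Filter.Eventually.of_forall fun ω => by positivity)]
    exact ENNReal.ofReal_le_ofReal hH4
  have inner_a : ∀ ω₁, ∫⁻ ω₂,
      ENNReal.ofReal (‖q (w - α • g ω₁) ω₂ - gradient J (w - α • g ω₁)‖ ^ 2) ∂P₂
      ≤ ENNReal.ofReal (σG ^ 2 / (No : ℝ)) := by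
    intro ω₁
    rw [← ofReal_integral_eq_lintegral_ofReal (hq2_int (w - α • g ω₁))
      (Filter.Eventually.of_forall fun ω => by positivity)]
    exact ENNReal.ofReal_le_ofReal (hq2 _)
  -- product lintegral bounds
  have Ia : ∫⁻ p : Ω₁ × Ω₂,
      ENNReal.ofReal (‖q (w - α • g p.1) p.2 - gradient J (w - α • g p.1)‖ ^ 2) ∂(P₁.prod P₂)
      ≤ ENNReal.ofReal (σG ^ 2 / (No : ℝ)) := by
    rw [lintegral_prod _ ma2.aemeasurable]
    calc ∫⁻ ω₁, ∫⁻ ω₂,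
          ENNReal.ofReal (‖q (w - α • g ω₁) ω₂ - gradient J (w - α • g ω₁)‖ ^ 2) ∂P₂ ∂P₁
        ≤ ∫⁻ _, ENNReal.ofReal (σG ^ 2 / (No : ℝ)) ∂P₁ := lintegral_mono fun ω₁ => inner_a ω₁
      _ = ENNReal.ofReal (σG ^ 2 / (No : ℝ)) := by simp
  have Ib2 : ∫⁻ p : Ω₁ × Ω₂, ENNReal.ofReal (‖g p.1 - gradient J w‖ ^ 2) ∂(P₁.prod P₂)
      ≤ ENNReal.ofReal (σG ^ 2 / (Nin : ℝ)) := by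
    rw [lintegral_fst_prod' P₁ P₂ _ mb2]; exact Jb2
  have Ib4 : ∫⁻ p : Ω₁ × Ω₂, ENNReal.ofReal (‖g p.1 - gradient J w‖ ^ 4) ∂(P₁.prod P₂)
      ≤ ENNReal.ofReal (3 * σG ^ 4 / (Nin : ℝ) ^ 2) := by
    rw [lintegral_fst_prod' P₁ P₂ _ mb4]; exact Jb4
  have Ih2 : ∫⁻ p : Ω₁ × Ω₂, ENNReal.ofReal (‖H p.1 - T‖ ^ 2) ∂(P₁.prod P₂)
      ≤ ENNReal.ofReal (σH ^ 2 / (Nin : ℝ)) := by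
    rw [lintegral_fst_prod' P₁ P₂ _ mh2]; exact Jh2
  have Ih4 : ∫⁻ p : Ω₁ × Ω₂, ENNReal.ofReal (‖H p.1 - T‖ ^ 4) ∂(P₁.prod P₂)
      ≤ ENNReal.ofReal (3 * σH ^ 4 / (Nin : ℝ) ^ 2) := by
    rw [lintegral_fst_prod' P₁ P₂ _ mh4]; exact Jh4
  have Icross : ∫⁻ p : Ω₁ × Ω₂,
      ENNReal.ofReal (‖H p.1 - T‖ ^ 2)
        * ENNReal.ofReal (‖q (w - α • g p.1) p.2 - gradient J (w - α • g p.1)‖ ^ 2)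
        ∂(P₁.prod P₂)
      ≤ ENNReal.ofReal (σH ^ 2 / (Nin : ℝ)) * ENNReal.ofReal (σG ^ 2 / (No : ℝ)) := by
    rw [lintegral_prod _ mcross.aemeasurable]
    calc ∫⁻ ω₁, ∫⁻ ω₂, ENNReal.ofReal (‖H ω₁ - T‖ ^ 2)
          * ENNReal.ofReal (‖q (w - α • g ω₁) ω₂ - gradient J (w - α • g ω₁)‖ ^ 2) ∂P₂ ∂P₁
        = ∫⁻ ω₁, ENNReal.ofReal (‖H ω₁ - T‖ ^ 2)
            * ∫⁻ ω₂, ENNReal.ofReal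
              (‖q (w - α • g ω₁) ω₂ - gradient J (w - α • g ω₁)‖ ^ 2) ∂P₂ ∂P₁ :=
          lintegral_congr fun ω₁ => lintegral_const_mul' _ _ ENNReal.ofReal_ne_top
      _ ≤ ∫⁻ ω₁, ENNReal.ofReal (‖H ω₁ - T‖ ^ 2) * ENNReal.ofReal (σG ^ 2 / (No : ℝ)) ∂P₁ :=
          lintegral_mono fun ω₁ => mul_le_mul_right (inner_a ω₁) _
      _ = (∫⁻ ω₁, ENNReal.ofReal (‖H ω₁ - T‖ ^ 2) ∂P₁) * ENNReal.ofReal (σG ^ 2 / (No : ℝ)) :=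
          lintegral_mul_const' _ _ ENNReal.ofReal_ne_top
      _ ≤ ENNReal.ofReal (σH ^ 2 / (Nin : ℝ)) * ENNReal.ofReal (σG ^ 2 / (No : ℝ)) :=
          mul_le_mul_left Jh2 _
  -- pointwise key bound
  have key : ∀ p : Ω₁ × Ω₂,
      ENNReal.ofReal (‖(ContinuousLinearMap.id ℝ (EuclideanSpace ℝ (Fin M)) - α • H p.1)
          (q (w - α • g p.1) p.2)
        - (ContinuousLinearMap.id ℝ (EuclideanSpace ℝ (Fin M)) - α • T) Gs‖ ^ 2)
      ≤ ENNReal.ofReal (6 * (1 + α * L) ^ 2)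
          * ENNReal.ofReal (‖q (w - α • g p.1) p.2 - gradient J (w - α • g p.1)‖ ^ 2)
        + ENNReal.ofReal (6 * (1 + α * L) ^ 2 * L ^ 2 * α ^ 2)
          * ENNReal.ofReal (‖g p.1 - gradient J w‖ ^ 2)
        + ENNReal.ofReal (3 * α ^ 2 * B ^ 2) * ENNReal.ofReal (‖H p.1 - T‖ ^ 2)
        + ENNReal.ofReal (6 * α ^ 2) * (ENNReal.ofReal (‖H p.1 - T‖ ^ 2)
          * ENNReal.ofReal (‖q (w - α • g p.1) p.2 - gradient J (w - α • g p.1)‖ ^ 2))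
        + ENNReal.ofReal (3 * α ^ 4) * ENNReal.ofReal (‖H p.1 - T‖ ^ 4)
        + ENNReal.ofReal (3 * α ^ 4 * L ^ 4) * ENNReal.ofReal (‖g p.1 - gradient J w‖ ^ 4) := by
    intro p
    have hJu : ‖gradient J (w - α • g p.1) - Gs‖ ≤ L * (α * ‖g p.1 - gradient J w‖) := by
      have h := hlip (w - α • g p.1) (w - α • gradient J w)
      have heq : (w - α • g p.1) - (w - α • gradient J w) = α • (gradient J w - g p.1) := by
        module
      rw [heq, norm_smul α (gradient J w - g p.1), Real.norm_of_nonneg hα.le,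
        norm_sub_rev (gradient J w) (g p.1)] at h
      exact h
    have hreal := meta_pointwise α L B hα.le hL.le hB.le T (H p.1)
      (q (w - α • g p.1) p.2) Gs (gradient J (w - α • g p.1))
      ‖g p.1 - gradient J w‖ (norm_nonneg _) hTle hGsB hJu
    refine le_trans (ENNReal.ofReal_le_ofReal hreal) (le_of_eq ?_)
    rw [ENNReal.ofReal_add (by positivity) (by positivity),
          ENNReal.ofReal_add (by positivity) (by positivity),
          ENNReal.ofReal_add (by positivity) (by positivity),
          ENNReal.ofReal_add (by positivity) (by positivity),
          ENNReal.ofReal_add (by positivity) (by positivity),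
          ENNReal.ofReal_mul (show (0:ℝ) ≤ 6 * (1 + α * L) ^ 2 by positivity),
          ENNReal.ofReal_mul (show (0:ℝ) ≤ 6 * (1 + α * L) ^ 2 * L ^ 2 * α ^ 2 by positivity),
          ENNReal.ofReal_mul (show (0:ℝ) ≤ 3 * α ^ 2 * B ^ 2 by positivity),
          ENNReal.ofReal_mul (show (0:ℝ) ≤ 6 * α ^ 2 by positivity),
          ENNReal.ofReal_mul (show (0:ℝ) ≤ ‖H p.1 - T‖ ^ 2 by positivity),
          ENNReal.ofReal_mul (show (0:ℝ) ≤ 3 * α ^ 4 by positivity),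
          ENNReal.ofReal_mul (show (0:ℝ) ≤ 3 * α ^ 4 * L ^ 4 by positivity)]
  -- put it together
  rw [integral_eq_lintegral_of_nonneg_ae
    (Filter.Eventually.of_forall fun p => by positivity) hint.aestronglyMeasurable]
  refine ENNReal.toReal_le_of_le_ofReal (by positivity) ?_
  have harith : 6 * (1 + α * L) ^ 2 * (σG ^ 2 / (No : ℝ))
      + 6 * (1 + α * L) ^ 2 * L ^ 2 * α ^ 2 * (σG ^ 2 / (Nin : ℝ))
      + 3 * α ^ 2 * B ^ 2 * (σH ^ 2 / (Nin : ℝ))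
      + 6 * α ^ 2 * (σH ^ 2 / (Nin : ℝ) * (σG ^ 2 / (No : ℝ)))
      + 3 * α ^ 4 * (3 * σH ^ 4 / (Nin : ℝ) ^ 2)
      + 3 * α ^ 4 * L ^ 4 * (3 * σG ^ 4 / (Nin : ℝ) ^ 2)
      ≤ 6 * (1 + α * L) ^ 2 * σG ^ 2 * (1 / (No : ℝ) + L ^ 2 * α ^ 2 / (Nin : ℝ))
        + (6 * α ^ 2 * σH ^ 2 / (Nin : ℝ)) * (B ^ 2 + σG ^ 2 / (No : ℝ))
        + (9 * α ^ 4 / (Nin : ℝ) ^ 2) * (σH ^ 4 + L ^ 4 * σG ^ 4) := by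
    have hEq : 6 * (1 + α * L) ^ 2 * σG ^ 2 * (1 / (No : ℝ) + L ^ 2 * α ^ 2 / (Nin : ℝ))
        + (6 * α ^ 2 * σH ^ 2 / (Nin : ℝ)) * (B ^ 2 + σG ^ 2 / (No : ℝ))
        + (9 * α ^ 4 / (Nin : ℝ) ^ 2) * (σH ^ 4 + L ^ 4 * σG ^ 4)
        = (6 * (1 + α * L) ^ 2 * (σG ^ 2 / (No : ℝ))
          + 6 * (1 + α * L) ^ 2 * L ^ 2 * α ^ 2 * (σG ^ 2 / (Nin : ℝ))
          + 3 * α ^ 2 * B ^ 2 * (σH ^ 2 / (Nin : ℝ))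
          + 6 * α ^ 2 * (σH ^ 2 / (Nin : ℝ) * (σG ^ 2 / (No : ℝ)))
          + 3 * α ^ 4 * (3 * σH ^ 4 / (Nin : ℝ) ^ 2)
          + 3 * α ^ 4 * L ^ 4 * (3 * σG ^ 4 / (Nin : ℝ) ^ 2))
          + 3 * α ^ 2 * B ^ 2 * (σH ^ 2 / (Nin : ℝ)) := by ring
    have hpos : 0 ≤ 3 * α ^ 2 * B ^ 2 * (σH ^ 2 / (Nin : ℝ)) := by positivity
    linarith
  calc ∫⁻ p : Ω₁ × Ω₂,
      ENNReal.ofReal (‖(ContinuousLinearMap.id ℝ (EuclideanSpace ℝ (Fin M)) - α • H p.1)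
          (q (w - α • g p.1) p.2)
        - (ContinuousLinearMap.id ℝ (EuclideanSpace ℝ (Fin M)) - α • T) Gs‖ ^ 2)
        ∂(P₁.prod P₂)
      ≤ ∫⁻ p : Ω₁ × Ω₂,
        (ENNReal.ofReal (6 * (1 + α * L) ^ 2)
          * ENNReal.ofReal (‖q (w - α • g p.1) p.2 - gradient J (w - α • g p.1)‖ ^ 2)
        + ENNReal.ofReal (6 * (1 + α * L) ^ 2 * L ^ 2 * α ^ 2)
          * ENNReal.ofReal (‖g p.1 - gradient J w‖ ^ 2)
        + ENNReal.ofReal (3 * α ^ 2 * B ^ 2) * ENNReal.ofReal (‖H p.1 - T‖ ^ 2)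
        + ENNReal.ofReal (6 * α ^ 2) * (ENNReal.ofReal (‖H p.1 - T‖ ^ 2)
          * ENNReal.ofReal (‖q (w - α • g p.1) p.2 - gradient J (w - α • g p.1)‖ ^ 2))
        + ENNReal.ofReal (3 * α ^ 4) * ENNReal.ofReal (‖H p.1 - T‖ ^ 4)
        + ENNReal.ofReal (3 * α ^ 4 * L ^ 4) * ENNReal.ofReal (‖g p.1 - gradient J w‖ ^ 4))
        ∂(P₁.prod P₂) := lintegral_mono key
    _ ≤ ENNReal.ofReal (6 * (1 + α * L) ^ 2) * ENNReal.ofReal (σG ^ 2 / (No : ℝ))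
        + ENNReal.ofReal (6 * (1 + α * L) ^ 2 * L ^ 2 * α ^ 2)
          * ENNReal.ofReal (σG ^ 2 / (Nin : ℝ))
        + ENNReal.ofReal (3 * α ^ 2 * B ^ 2) * ENNReal.ofReal (σH ^ 2 / (Nin : ℝ))
        + ENNReal.ofReal (6 * α ^ 2)
          * (ENNReal.ofReal (σH ^ 2 / (Nin : ℝ)) * ENNReal.ofReal (σG ^ 2 / (No : ℝ)))
        + ENNReal.ofReal (3 * α ^ 4) * ENNReal.ofReal (3 * σH ^ 4 / (Nin : ℝ) ^ 2)
        + ENNReal.ofReal (3 * α ^ 4 * L ^ 4)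
          * ENNReal.ofReal (3 * σG ^ 4 / (Nin : ℝ) ^ 2) := by
        rw [lintegral_add_right _ (mb4'.const_mul _),
          lintegral_add_right _ (mh4'.const_mul _),
          lintegral_add_right _ (mcross.const_mul _),
          lintegral_add_right _ (mh2'.const_mul _),
          lintegral_add_right _ (mb2'.const_mul _),
          lintegral_const_mul' _ _ ENNReal.ofReal_ne_top,
          lintegral_const_mul' _ _ ENNReal.ofReal_ne_top,
          lintegral_const_mul' _ _ ENNReal.ofReal_ne_top,
          lintegral_const_mul' _ _ ENNReal.ofReal_ne_top,
          lintegral_const_mul' _ _ ENNReal.ofReal_ne_top,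
          lintegral_const_mul' _ _ ENNReal.ofReal_ne_top]
        gcongr <;>
          first
            | exact Ia | exact Ib2 | exact Ih2 | exact Icross | exact Ih4 | exact Ib4
    _ = ENNReal.ofReal (6 * (1 + α * L) ^ 2 * (σG ^ 2 / (No : ℝ))
        + 6 * (1 + α * L) ^ 2 * L ^ 2 * α ^ 2 * (σG ^ 2 / (Nin : ℝ))
        + 3 * α ^ 2 * B ^ 2 * (σH ^ 2 / (Nin : ℝ))
        + 6 * α ^ 2 * (σH ^ 2 / (Nin : ℝ) * (σG ^ 2 / (No : ℝ)))
        + 3 * α ^ 4 * (3 * σH ^ 4 / (Nin : ℝ) ^ 2)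
        + 3 * α ^ 4 * L ^ 4 * (3 * σG ^ 4 / (Nin : ℝ) ^ 2)) := by
        rw [← ENNReal.ofReal_mul (show (0:ℝ) ≤ 6 * (1 + α * L) ^ 2 by positivity),
          ← ENNReal.ofReal_mul (show (0:ℝ) ≤ 6 * (1 + α * L) ^ 2 * L ^ 2 * α ^ 2 by positivity),
          ← ENNReal.ofReal_mul (show (0:ℝ) ≤ 3 * α ^ 2 * B ^ 2 by positivity),
          ← ENNReal.ofReal_mul (show (0:ℝ) ≤ σH ^ 2 / (Nin : ℝ) by positivity),
          ← ENNReal.ofReal_mul (show (0:ℝ) ≤ 6 * α ^ 2 by positivity),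
          ← ENNReal.ofReal_mul (show (0:ℝ) ≤ 3 * α ^ 4 by positivity),
          ← ENNReal.ofReal_mul (show (0:ℝ) ≤ 3 * α ^ 4 * L ^ 4 by positivity),
          ← ENNReal.ofReal_add (by positivity) (by positivity),
          ← ENNReal.ofReal_add (by positivity) (by positivity),
          ← ENNReal.ofReal_add (by positivity) (by positivity),
          ← ENNReal.ofReal_add (by positivity) (by positivity),
          ← ENNReal.ofReal_add (by positivity) (by positivity)]
    _ ≤ ENNReal.ofReal (6 * (1 + α * L) ^ 2 * σG ^ 2 * (1 / (No : ℝ) + L ^ 2 * α ^ 2 / (Nin : ℝ))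
        + (6 * α ^ 2 * σH ^ 2 / (Nin : ℝ)) * (B ^ 2 + σG ^ 2 / (No : ℝ))
        + (9 * α ^ 4 / (Nin : ℝ) ^ 2) * (σH ^ 4 + L ^ 4 * σG ^ 4)) :=
        ENNReal.ofReal_le_ofReal harith
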